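/- (1) If every proper submodule of M is a weakly classical 1-absorbing prime submodule, then Jac(R)³M = 0, i.e., xyzm = 0 for all x, y, z in the Jacobson radical Jac(R) of R and all m ∈ M. (2) If moreover (R, 𝔪) is a local ring, then every proper submodule of M is a weakly classical 1-absorbing prime submodule if and only if 𝔪³M = 0. -/
import Mathlib


/-- A proper submodule `N` of `M` is weakly classical 1-absorbing prime if whenever
`abcm ∈ N` and `abcm ≠ 0` for nonunits `a, b, c ∈ R` and `m ∈ M`, then `abm ∈ N` or `cm ∈ N`. -/
def IsWeaklyClassical1AbsorbingPrime {R : Type*} [CommRing R] {M : Type*} [AddCommGroup M]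
    [Module R M] (N : Submodule R M) : Prop :=
  N ≠ ⊤ ∧ ∀ a b c : R, ∀ m : M, ¬ IsUnit a → ¬ IsUnit b → ¬ IsUnit c →
    (a * b * c) • m ∈ N → (a * b * c) • m ≠ 0 → ((a * b) • m ∈ N ∨ c • m ∈ N)

/-- A proper ideal `I` of `R` is weakly 1-absorbing prime if whenever `abc ∈ I` and
`abc ≠ 0` for nonunits `a, b, c ∈ R`, then `ab ∈ I` or `c ∈ I`. -/
def IsWeakly1AbsorbingPrimeIdeal {R : Type*} [CommRing R] (I : Ideal R) : Prop :=
  I ≠ ⊤ ∧ ∀ a b c : R, ¬ IsUnit a → ¬ IsUnit b → ¬ IsUnit c →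
    a * b * c ∈ I → a * b * c ≠ 0 → (a * b ∈ I ∨ c ∈ I)

private lemma unit_smul_cancel {R : Type*} [CommRing R] {M : Type*} [AddCommGroup M]
    [Module R M] {u : R} {v : M} (hu : IsUnit u) (h : u • v = 0) : v = 0 := by
  obtain ⟨w, rfl⟩ := hu
  have := congrArg (fun t => ((↑w⁻¹ : R) • t : M)) h
  simpa [smul_smul] using this

private lemma jac_nonunit {R : Type*} [CommRing R] [Nontrivial R] {x : R}
    (hx : x ∈ (⊥ : Ideal R).jacobson) : ¬ IsUnit x := by
  intro hu
  obtain ⟨w, rfl⟩ := hu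
  have h := (Ideal.mem_jacobson_bot.mp hx) (-(↑w⁻¹ : R))
  have : ((↑w : R) * (-(↑w⁻¹ : R)) + 1) = 0 := by
    have : ((↑w : R) * (↑w⁻¹ : R)) = 1 := w.mul_inv
    rw [mul_neg, this]; ring
  rw [this] at h
  exact not_isUnit_zero h

private lemma jac_part {R : Type*} [CommRing R] [Nontrivial R] {M : Type*} [AddCommGroup M]
    [Module R M] [Nontrivial M]
    (hyp : ∀ N : Submodule R M, N ≠ ⊤ → IsWeaklyClassical1AbsorbingPrime N) :
    ∀ x ∈ (⊥ : Ideal R).jacobson, ∀ y ∈ (⊥ : Ideal R).jacobson,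
      ∀ z ∈ (⊥ : Ideal R).jacobson, ∀ m : M, (x * y * z) • m = 0 := by
  intro x hx y hy z hz m
  by_contra h
  set N : Submodule R M := Submodule.span R {(x * y * z) • m} with hN
  by_cases htop : N = ⊤
  · -- M = R • (xyz m), so m = s • (xyz m)
    have hm : m ∈ N := htop ▸ Submodule.mem_top
    obtain ⟨s, hs⟩ := Submodule.mem_span_singleton.mp hm
    -- (1 - s*(x*y*z)) • m = 0, and it is a unit
    have hj : x * y * z ∈ (⊥ : Ideal R).jacobson :=
      Ideal.mul_mem_right _ _ (Ideal.mul_mem_right _ _ hx)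
    have hu : IsUnit ((x * y * z) * (-s) + 1) := (Ideal.mem_jacobson_bot.mp hj) (-s)
    have heq : ((x * y * z) * (-s) + 1) • m = 0 := by
      rw [add_smul, one_smul, mul_comm, neg_mul, neg_smul, mul_smul, hs]
      simp
    have : m = 0 := unit_smul_cancel hu heq
    exact h (by simp [this])
  · obtain ⟨-, hwc⟩ := hyp N htop
    have hmem : (x * y * z) • m ∈ N := Submodule.mem_span_singleton_self _
    rcases hwc x y z m (jac_nonunit hx) (jac_nonunit hy) (jac_nonunit hz) hmem h with h1 | h1
    · obtain ⟨r, hr⟩ := Submodule.mem_span_singleton.mp h1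
      -- (x*y) • m = r • ((x*y*z) • m) = (z * r) • ((x*y) • m)
      have hu : IsUnit (z * (-r) + 1) := (Ideal.mem_jacobson_bot.mp hz) (-r)
      have heq : (z * (-r) + 1) • ((x * y) • m) = 0 := by
        rw [add_smul, one_smul, smul_smul]
        have : (z * -r) * (x * y) = -(r * (x * y * z)) := by ring
        rw [this, neg_smul, mul_smul, hr]
        simp
      have h0 : (x * y) • m = 0 := unit_smul_cancel hu heq
      apply h
      rw [show x * y * z = z * (x * y) by ring, mul_smul, h0, smul_zero]
    · obtain ⟨r, hr⟩ := Submodule.mem_span_singleton.mp h1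
      have hu : IsUnit (x * (-(r * y)) + 1) := (Ideal.mem_jacobson_bot.mp hx) (-(r * y))
      have heq : (x * (-(r * y)) + 1) • (z • m) = 0 := by
        rw [add_smul, one_smul, smul_smul]
        have : (x * -(r * y)) * z = -(r * (x * y * z)) := by ring
        rw [this, neg_smul, mul_smul, hr]
        simp
      have h0 : z • m = 0 := unit_smul_cancel hu heq
      apply h
      have : (x * y * z) • m = (x * y) • (z • m) := by rw [← mul_smul]
      rw [this, h0, smul_zero]

/-- (1) If every proper submodule of `M` is weakly classical 1-absorbing
prime, then `Jac(R)³M = 0`. (2) If `R` is local with maximal ideal `𝔪`, then every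
proper submodule of `M` is weakly classical 1-absorbing prime iff `𝔪³M = 0`. -/
theorem stmt_19 {R : Type*} [CommRing R] [Nontrivial R] {M : Type*} [AddCommGroup M]
    [Module R M] [Nontrivial M] :
    ((∀ N : Submodule R M, N ≠ ⊤ → IsWeaklyClassical1AbsorbingPrime N) →
      ∀ x ∈ (⊥ : Ideal R).jacobson, ∀ y ∈ (⊥ : Ideal R).jacobson,
        ∀ z ∈ (⊥ : Ideal R).jacobson, ∀ m : M, (x * y * z) • m = 0) ∧
    (∀ _ : IsLocalRing R,
      ((∀ N : Submodule R M, N ≠ ⊤ → IsWeaklyClassical1AbsorbingPrime N) ↔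
        ∀ x ∈ IsLocalRing.maximalIdeal R, ∀ y ∈ IsLocalRing.maximalIdeal R,
          ∀ z ∈ IsLocalRing.maximalIdeal R, ∀ m : M, (x * y * z) • m = 0)) := by
  constructor
  · exact jac_part
  · intro hloc
    have hjac : (⊥ : Ideal R).jacobson = IsLocalRing.maximalIdeal R :=
      IsLocalRing.jacobson_eq_maximalIdeal ⊥ bot_ne_top
    constructor
    · intro hyp x hx y hy z hz m
      exact jac_part hyp x (hjac ▸ hx) y (hjac ▸ hy) z (hjac ▸ hz) m
    · intro h0 N hN
      refine ⟨hN, fun a b c m ha hb hc hmem hne => ?_⟩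
      exact absurd (h0 a ha b hb c hc m) hne
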